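/- Soundness of bidirectional typechecking: (1) if Γ ⊢ v ⇐ τ⁺ or Γ ⊢ v ⇒ τ⁺ then there exists a value v' with Γ ⊢ v' : τ⁺ and |v'| = v; (2) if Γ ⊢ e ⇐ σ⁻ or Γ ⊢ e ⇒ σ⁻ then there exists a computation e' with Γ ⊢ e' : σ⁻ and |e'| = e. -/

import Mathlib

namespace CBPV

abbrev Label := String
abbrev Var := String

-- Positive types (values); `name` refers to an equirecursively defined type name.
mutual
inductive PosTp : Type where
  | name : String → PosTp
  | str  : PosStr → PosTp

/-- Structural positive types. -/
inductive PosStr : Type where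
  | tensor : PosTp → PosTp → PosStr
  | one    : PosStr
  | plus   : List (Label × PosTp) → PosStr
  | down   : NegTp → PosStr

/-- Negative types (computations). -/
inductive NegTp : Type where
  | name : String → NegTp
  | str  : NegStr → NegTp

/-- Structural negative types. -/
inductive NegStr : Type where
  | arrow   : PosTp → NegTp → NegStr
  | withRec : List (Label × NegTp) → NegStr
  | up      : PosTp → NegStr
end

-- Values and computations, including the type annotations `(v : τ⁺)` and
-- `(e : σ⁻)`, which exist purely for bidirectional typechecking and are
-- erased before evaluation.
mutual
inductive Val : Type where
  | var   : Var → Val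
  | pair  : Val → Val → Val
  | unit  : Val
  | inj   : Label → Val → Val
  | thunk : Comp → Val
  | anno  : Val → PosTp → Val

inductive Comp : Type where
  | lam       : Var → Comp → Comp
  | app       : Comp → Val → Comp
  | record    : List (Label × Comp) → Comp
  | proj      : Comp → Label → Comp
  | ret       : Val → Comp
  | letret    : Var → Comp → Comp → Comp
  | name      : String → Comp
  | matchPair : Val → Var → Var → Comp → Comp
  | matchUnit : Val → Comp → Comp
  | matchSum  : Val → List (Label × Var × Comp) → Comp
  | force     : Val → Comp
  | anno      : Comp → NegTp → Comp
end

/-- A global signature: equirecursive (contractive) type definitions and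
recursive expression definitions `f : σ⁻ = e`. -/
structure Signature : Type where
  pos  : String → PosStr
  neg  : String → NegStr
  defs : String → NegTp × Comp

mutual
/-- Erasure of type annotations from values. -/
def eraseV : Val → Val
  | .var y => .var y
  | .pair v₁ v₂ => .pair (eraseV v₁) (eraseV v₂)
  | .unit => .unit
  | .inj j v => .inj j (eraseV v)
  | .thunk e => .thunk (eraseC e)
  | .anno v _ => eraseV v

/-- Erasure of type annotations from computations. -/
def eraseC : Comp → Comp
  | .lam y e => .lam y (eraseC e)
  | .app e v => .app (eraseC e) (eraseV v)
  | .record L => .record (eraseRec L)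
  | .proj e j => .proj (eraseC e) j
  | .ret v => .ret (eraseV v)
  | .letret y e₁ e₂ => .letret y (eraseC e₁) (eraseC e₂)
  | .name f => .name f
  | .matchPair v y z e => .matchPair (eraseV v) y z (eraseC e)
  | .matchUnit v e => .matchUnit (eraseV v) (eraseC e)
  | .matchSum v B => .matchSum (eraseV v) (eraseBr B)
  | .force v => .force (eraseV v)
  | .anno e _ => eraseC e

def eraseRec : List (Label × Comp) → List (Label × Comp)
  | [] => []
  | (l, e) :: rest => (l, eraseC e) :: eraseRec rest

def eraseBr : List (Label × Var × Comp) → List (Label × Var × Comp)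
  | [] => []
  | (l, y, e) :: rest => (l, y, eraseC e) :: eraseBr rest
end

/-- Unfold a positive type to a structural type using the signature
(equirecursive type definitions). -/
def unfP (Sg : Signature) : PosTp → PosStr
  | .name t => Sg.pos t
  | .str τ => τ

/-- Unfold a negative type to a structural type using the signature. -/
def unfN (Sg : Signature) : NegTp → NegStr
  | .name s => Sg.neg s
  | .str σ => σ

end CBPV

namespace CBPV

/-- One unfolding of the rules for emptiness of general positive types
(type names are unfolded equirecursively through the signature). -/
def GEmptyUnf (Sg : Signature) (S : PosTp → Prop) (τ : PosTp) : Prop :=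
  (∃ L, unfP Sg τ = .plus L ∧ ∀ p ∈ L, S (Prod.snd p)) ∨
  (∃ τ₁ τ₂, unfP Sg τ = .tensor τ₁ τ₂ ∧ (S τ₁ ∨ S τ₂))

/-- `τ⁺ empty`, for general positive types (greatest fixed point). -/
def GEmpty (Sg : Signature) (τ : PosTp) : Prop :=
  ∃ S : PosTp → Prop, (∀ υ, S υ → GEmptyUnf Sg S υ) ∧ S τ

/-- `σ⁻ full`, for general negative types. -/
def GFull (Sg : Signature) (σ : NegTp) : Prop :=
  (∃ τ₁ σ₂, unfN Sg σ = .arrow τ₁ σ₂ ∧ GEmpty Sg τ₁) ∨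
  unfN Sg σ = .withRec []

/-- One unfolding of the rules for positive subtyping of general types. -/
def GPosUnf (Sg : Signature) (P : PosTp → PosTp → Prop)
    (N : NegTp → NegTp → Prop) (τ υ : PosTp) : Prop :=
  (∃ τ₁ τ₂ υ₁ υ₂, unfP Sg τ = .tensor τ₁ τ₂ ∧ unfP Sg υ = .tensor υ₁ υ₂ ∧
     P τ₁ υ₁ ∧ P τ₂ υ₂) ∨
  (unfP Sg τ = .one ∧ unfP Sg υ = .one) ∨
  (∃ L K, unfP Sg τ = .plus L ∧ unfP Sg υ = .plus K ∧
     ∀ p ∈ L, GEmpty Sg (Prod.snd p) ∨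
       ∃ υj, K.lookup (Prod.fst p) = some υj ∧ P (Prod.snd p) υj) ∨
  (∃ σ ρ, unfP Sg τ = .down σ ∧ unfP Sg υ = .down ρ ∧ N σ ρ) ∨
  GEmpty Sg τ

/-- One unfolding of the rules for negative subtyping of general types. -/
def GNegUnf (Sg : Signature) (P : PosTp → PosTp → Prop)
    (N : NegTp → NegTp → Prop) (σ ρ : NegTp) : Prop :=
  (∃ τ₁ σ₂ υ₁ ρ₂, unfN Sg σ = .arrow τ₁ σ₂ ∧ unfN Sg ρ = .arrow υ₁ ρ₂ ∧
     P υ₁ τ₁ ∧ N σ₂ ρ₂) ∨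
  (∃ τ υ, unfN Sg σ = .up τ ∧ unfN Sg ρ = .up υ ∧ P τ υ) ∨
  (∃ L K, unfN Sg σ = .withRec L ∧ unfN Sg ρ = .withRec K ∧
     ∀ p ∈ K, ∃ σj, L.lookup (Prod.fst p) = some σj ∧ N σj (Prod.snd p)) ∨
  (∃ τ, unfN Sg σ = .up τ ∧ GEmpty Sg τ) ∨
  GFull Sg ρ

/-- `τ⁺ ≤ υ⁺`: syntactic subtyping of general positive types
(greatest fixed point / circular derivations). -/
def GSubP (Sg : Signature) (τ υ : PosTp) : Prop :=
  ∃ (P : PosTp → PosTp → Prop) (N : NegTp → NegTp → Prop),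
    (∀ a b, P a b → GPosUnf Sg P N a b) ∧
    (∀ a b, N a b → GNegUnf Sg P N a b) ∧ P τ υ

/-- `σ⁻ ≤ ρ⁻`: syntactic subtyping of general negative types. -/
def GSubN (Sg : Signature) (σ ρ : NegTp) : Prop :=
  ∃ (P : PosTp → PosTp → Prop) (N : NegTp → NegTp → Prop),
    (∀ a b, P a b → GPosUnf Sg P N a b) ∧
    (∀ a b, N a b → GNegUnf Sg P N a b) ∧ N σ ρ

end CBPV

namespace CBPV

/-- Typing contexts: variables with positive types. -/
abbrev Ctx := List (Var × PosTp)

mutual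
/-- Declarative typing of values, `Γ ⊢ v : τ⁺`. -/
inductive VTyp (Sg : Signature) : Ctx → Val → PosTp → Prop where
  | var : Γ.lookup x = some τ → VTyp Sg Γ (.var x) τ
  | pair : VTyp Sg Γ v₁ τ₁ → VTyp Sg Γ v₂ τ₂ →
      VTyp Sg Γ (.pair v₁ v₂) (.str (.tensor τ₁ τ₂))
  | unit : VTyp Sg Γ .unit (.str .one)
  | inj : L.lookup j = some τj → VTyp Sg Γ v τj →
      VTyp Sg Γ (.inj j v) (.str (.plus L))
  | thunk : ETyp Sg Γ e σ → VTyp Sg Γ (.thunk e) (.str (.down σ))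
  | sub : VTyp Sg Γ v τ → GSubP Sg τ τ' → VTyp Sg Γ v τ'

/-- Declarative typing of computations, `Γ ⊢ e : σ⁻`. -/
inductive ETyp (Sg : Signature) : Ctx → Comp → NegTp → Prop where
  | lam : ETyp Sg ((x, τ) :: Γ) e σ → ETyp Sg Γ (.lam x e) (.str (.arrow τ σ))
  | app : ETyp Sg Γ e (.str (.arrow τ σ)) → VTyp Sg Γ v τ →
      ETyp Sg Γ (.app e v) σ
  | record :
      (Es.map Prod.fst).Nodup →
      (∀ j : Label, (Ks.lookup j).isSome ↔ (Es.lookup j).isSome) →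
      (∀ (j : Label) (ej : Comp) (σj : NegTp),
        Es.lookup j = some ej → Ks.lookup j = some σj → ETyp Sg Γ ej σj) →
      ETyp Sg Γ (.record Es) (.str (.withRec Ks))
  | proj : ETyp Sg Γ e (.str (.withRec Ks)) → Ks.lookup j = some σj →
      ETyp Sg Γ (.proj e j) σj
  | ret : VTyp Sg Γ v τ → ETyp Sg Γ (.ret v) (.str (.up τ))
  | letret : ETyp Sg Γ e₁ (.str (.up τ)) → ETyp Sg ((x, τ) :: Γ) e₂ σ →
      ETyp Sg Γ (.letret x e₁ e₂) σ
  | name : Sg.defs f = (σ, e) → ETyp Sg Γ (.name f) σ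
  | matchPair : VTyp Sg Γ v (.str (.tensor τ₁ τ₂)) →
      ETyp Sg ((y, τ₂) :: (x, τ₁) :: Γ) e σ →
      ETyp Sg Γ (.matchPair v x y e) σ
  | matchUnit : VTyp Sg Γ v (.str .one) → ETyp Sg Γ e σ →
      ETyp Sg Γ (.matchUnit v e) σ
  | matchSum : VTyp Sg Γ v (.str (.plus L)) →
      (Bs.map Prod.fst).Nodup →
      (∀ ℓ : Label, (L.lookup ℓ).isSome ↔ (Bs.lookup ℓ).isSome) →
      (∀ (ℓ : Label) (τℓ : PosTp) (x : Var) (eℓ : Comp),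
        L.lookup ℓ = some τℓ → Bs.lookup ℓ = some (x, eℓ) →
        ETyp Sg ((x, τℓ) :: Γ) eℓ σ) →
      ETyp Sg Γ (.matchSum v Bs) σ
  | force : VTyp Sg Γ v (.str (.down σ)) → ETyp Sg Γ (.force v) σ
  | sub : ETyp Sg Γ e σ → GSubN Sg σ σ' → ETyp Sg Γ e σ'
end

end CBPV

namespace CBPV

mutual
/-- Bidirectional checking of values, `Γ ⊢ v ⇐ τ⁺`. -/
inductive VChk (Sg : Signature) : Ctx → Val → PosTp → Prop where
  | pair : VChk Sg Γ v₁ τ₁ → VChk Sg Γ v₂ τ₂ →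
      VChk Sg Γ (.pair v₁ v₂) (.str (.tensor τ₁ τ₂))
  | unit : VChk Sg Γ .unit (.str .one)
  | inj : L.lookup j = some τj → VChk Sg Γ v τj →
      VChk Sg Γ (.inj j v) (.str (.plus L))
  | thunk : EChk Sg Γ e σ → VChk Sg Γ (.thunk e) (.str (.down σ))
  | sub : VSyn Sg Γ v τ → GSubP Sg τ τ' → VChk Sg Γ v τ'

/-- Bidirectional synthesis for values, `Γ ⊢ v ⇒ τ⁺`. -/
inductive VSyn (Sg : Signature) : Ctx → Val → PosTp → Prop where
  | var : Γ.lookup x = some τ → VSyn Sg Γ (.var x) τ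
  | anno : VChk Sg Γ v τ → VSyn Sg Γ (.anno v τ) τ

/-- Bidirectional checking of computations, `Γ ⊢ e ⇐ σ⁻`. -/
inductive EChk (Sg : Signature) : Ctx → Comp → NegTp → Prop where
  | lam : EChk Sg ((x, τ) :: Γ) e σ → EChk Sg Γ (.lam x e) (.str (.arrow τ σ))
  | record :
      (Es.map Prod.fst).Nodup →
      (∀ j : Label, (Ks.lookup j).isSome ↔ (Es.lookup j).isSome) →
      (∀ (j : Label) (ej : Comp) (σj : NegTp),
        Es.lookup j = some ej → Ks.lookup j = some σj → EChk Sg Γ ej σj) →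
      EChk Sg Γ (.record Es) (.str (.withRec Ks))
  | ret : VChk Sg Γ v τ → EChk Sg Γ (.ret v) (.str (.up τ))
  | letret : ESyn Sg Γ e₁ (.str (.up τ)) → EChk Sg ((x, τ) :: Γ) e₂ σ →
      EChk Sg Γ (.letret x e₁ e₂) σ
  | matchPair : VSyn Sg Γ v (.str (.tensor τ₁ τ₂)) →
      EChk Sg ((y, τ₂) :: (x, τ₁) :: Γ) e σ →
      EChk Sg Γ (.matchPair v x y e) σ
  | matchUnit : VSyn Sg Γ v (.str .one) → EChk Sg Γ e σ →
      EChk Sg Γ (.matchUnit v e) σ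
  | matchSum : VSyn Sg Γ v (.str (.plus L)) →
      (Bs.map Prod.fst).Nodup →
      (∀ ℓ : Label, (L.lookup ℓ).isSome ↔ (Bs.lookup ℓ).isSome) →
      (∀ (ℓ : Label) (τℓ : PosTp) (x : Var) (eℓ : Comp),
        L.lookup ℓ = some τℓ → Bs.lookup ℓ = some (x, eℓ) →
        EChk Sg ((x, τℓ) :: Γ) eℓ σ) →
      EChk Sg Γ (.matchSum v Bs) σ
  | sub : ESyn Sg Γ e σ → GSubN Sg σ σ' → EChk Sg Γ e σ'

/-- Bidirectional synthesis for computations, `Γ ⊢ e ⇒ σ⁻`. -/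
inductive ESyn (Sg : Signature) : Ctx → Comp → NegTp → Prop where
  | app : ESyn Sg Γ e (.str (.arrow τ σ)) → VChk Sg Γ v τ →
      ESyn Sg Γ (.app e v) σ
  | proj : ESyn Sg Γ e (.str (.withRec Ks)) → Ks.lookup j = some σj →
      ESyn Sg Γ (.proj e j) σj
  | force : VSyn Sg Γ v (.str (.down σ)) → ESyn Sg Γ (.force v) σ
  | name : Sg.defs f = (σ, e) → ESyn Sg Γ (.name f) σ
  | anno : EChk Sg Γ e σ → ESyn Sg Γ (.anno e σ) σ
end

end CBPV

namespace CBPV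

mutual
theorem eraseV_idem : ∀ v, eraseV (eraseV v) = eraseV v
  | .var _ => rfl
  | .pair v₁ v₂ => by simp [eraseV, eraseV_idem v₁, eraseV_idem v₂]
  | .unit => rfl
  | .inj j v => by simp [eraseV, eraseV_idem v]
  | .thunk e => by simp [eraseV, eraseC_idem e]
  | .anno v _ => by simp [eraseV, eraseV_idem v]

theorem eraseC_idem : ∀ e, eraseC (eraseC e) = eraseC e
  | .lam y e => by simp [eraseC, eraseC_idem e]
  | .app e v => by simp [eraseC, eraseC_idem e, eraseV_idem v]
  | .record L => by simp [eraseC, eraseRec_idem L]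
  | .proj e j => by simp [eraseC, eraseC_idem e]
  | .ret v => by simp [eraseC, eraseV_idem v]
  | .letret y e₁ e₂ => by simp [eraseC, eraseC_idem e₁, eraseC_idem e₂]
  | .name _ => rfl
  | .matchPair v y z e => by simp [eraseC, eraseV_idem v, eraseC_idem e]
  | .matchUnit v e => by simp [eraseC, eraseV_idem v, eraseC_idem e]
  | .matchSum v B => by simp [eraseC, eraseV_idem v, eraseBr_idem B]
  | .force v => by simp [eraseC, eraseV_idem v]
  | .anno e _ => by simp [eraseC, eraseC_idem e]

theorem eraseRec_idem : ∀ L, eraseRec (eraseRec L) = eraseRec L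
  | [] => rfl
  | (l, e) :: rest => by simp [eraseRec, eraseC_idem e, eraseRec_idem rest]

theorem eraseBr_idem : ∀ B, eraseBr (eraseBr B) = eraseBr B
  | [] => rfl
  | (l, y, e) :: rest => by simp [eraseBr, eraseC_idem e, eraseBr_idem rest]
end

theorem eraseRec_fst : ∀ L : List (Label × Comp),
    (eraseRec L).map Prod.fst = L.map Prod.fst
  | [] => rfl
  | (l, e) :: rest => by simp [eraseRec, eraseRec_fst rest]

theorem eraseBr_fst : ∀ B : List (Label × Var × Comp),
    (eraseBr B).map Prod.fst = B.map Prod.fst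
  | [] => rfl
  | (l, y, e) :: rest => by simp [eraseBr, eraseBr_fst rest]

theorem eraseRec_lookup : ∀ (L : List (Label × Comp)) (j : Label),
    (eraseRec L).lookup j = (L.lookup j).map eraseC
  | [], _ => rfl
  | (l, e) :: rest, j => by
    cases hb : (j == l) <;>
      simp [eraseRec, List.lookup, hb, eraseRec_lookup rest j]

theorem eraseBr_lookup : ∀ (B : List (Label × Var × Comp)) (j : Label),
    (eraseBr B).lookup j = (B.lookup j).map (fun p => (p.1, eraseC p.2))
  | [], _ => rfl
  | (l, y, e) :: rest, j => by
    cases hb : (j == l) <;>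
      simp [eraseBr, List.lookup, hb, eraseBr_lookup rest j]

/-- Core soundness: erased terms are declaratively well-typed. -/
theorem sound_erase (Sg : Signature) :
    (∀ (Γ : Ctx) (v : Val) (τ : PosTp), VChk Sg Γ v τ → VTyp Sg Γ (eraseV v) τ) ∧
    (∀ (Γ : Ctx) (v : Val) (τ : PosTp), VSyn Sg Γ v τ → VTyp Sg Γ (eraseV v) τ) ∧
    (∀ (Γ : Ctx) (e : Comp) (σ : NegTp), EChk Sg Γ e σ → ETyp Sg Γ (eraseC e) σ) ∧
    (∀ (Γ : Ctx) (e : Comp) (σ : NegTp), ESyn Sg Γ e σ → ETyp Sg Γ (eraseC e) σ) := by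
  have c_pair : ∀ {Γ : Ctx} {v₁ : Val} {τ₁ : PosTp} {v₂ : Val} {τ₂ : PosTp},
      VChk Sg Γ v₁ τ₁ → VChk Sg Γ v₂ τ₂ →
      VTyp Sg Γ (eraseV v₁) τ₁ → VTyp Sg Γ (eraseV v₂) τ₂ →
      VTyp Sg Γ (eraseV (.pair v₁ v₂)) (.str (.tensor τ₁ τ₂)) := by
    intro _ _ _ _ _ _ _ ih₁ ih₂
    simp only [eraseV]; exact .pair ih₁ ih₂
  have c_unit : ∀ {Γ : Ctx}, VTyp Sg Γ (eraseV .unit) (.str .one) := by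
    intro _; simp only [eraseV]; exact .unit
  have c_inj : ∀ {τj : PosTp} {Γ : Ctx} {v : Val} {j : Label}
      {L : List (Label × PosTp)}, L.lookup j = some τj → VChk Sg Γ v τj →
      VTyp Sg Γ (eraseV v) τj →
      VTyp Sg Γ (eraseV (.inj j v)) (.str (.plus L)) := by
    intro _ _ _ _ _ hl _ ih
    simp only [eraseV]; exact .inj hl ih
  have c_thunk : ∀ {Γ : Ctx} {e : Comp} {σ : NegTp}, EChk Sg Γ e σ →
      ETyp Sg Γ (eraseC e) σ →
      VTyp Sg Γ (eraseV (.thunk e)) (.str (.down σ)) := by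
    intro _ _ _ _ ih
    simp only [eraseV]; exact .thunk ih
  have c_subV : ∀ {Γ : Ctx} {v : Val} {τ τ' : PosTp}, VSyn Sg Γ v τ →
      GSubP Sg τ τ' → VTyp Sg Γ (eraseV v) τ → VTyp Sg Γ (eraseV v) τ' := by
    intro _ _ _ _ _ hsub ih; exact .sub ih hsub
  have c_var : ∀ {τ : PosTp} {Γ : Ctx} {x : Var}, Γ.lookup x = some τ →
      VTyp Sg Γ (eraseV (.var x)) τ := by
    intro _ _ _ hl; simp only [eraseV]; exact .var hl
  have c_annoV : ∀ {Γ : Ctx} {v : Val} {τ : PosTp}, VChk Sg Γ v τ →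
      VTyp Sg Γ (eraseV v) τ → VTyp Sg Γ (eraseV (.anno v τ)) τ := by
    intro _ _ _ _ ih; simp only [eraseV]; exact ih
  have c_lam : ∀ {x : Var} {τ : PosTp} {Γ : List (Var × PosTp)} {e : Comp}
      {σ : NegTp}, EChk Sg ((x, τ) :: Γ) e σ →
      ETyp Sg ((x, τ) :: Γ) (eraseC e) σ →
      ETyp Sg Γ (eraseC (.lam x e)) (.str (.arrow τ σ)) := by
    intro _ _ _ _ _ _ ih; simp only [eraseC]; exact .lam ih
  have c_record : ∀ {Γ : Ctx} {Es : List (Label × Comp)}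
      {Ks : List (Label × NegTp)}, (Es.map Prod.fst).Nodup →
      (∀ j : Label, (Ks.lookup j).isSome ↔ (Es.lookup j).isSome) →
      (∀ (j : Label) (ej : Comp) (σj : NegTp),
        Es.lookup j = some ej → Ks.lookup j = some σj → EChk Sg Γ ej σj) →
      (∀ (j : Label) (ej : Comp) (σj : NegTp),
        Es.lookup j = some ej → Ks.lookup j = some σj →
        ETyp Sg Γ (eraseC ej) σj) →
      ETyp Sg Γ (eraseC (.record Es)) (.str (.withRec Ks)) := by
    intro Γ Es Ks hn hsome _ ih
    simp only [eraseC]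
    refine ETyp.record ?_ ?_ ?_
    · rw [eraseRec_fst]; exact hn
    · intro j; rw [eraseRec_lookup, Option.isSome_map]; exact hsome j
    · intro j ej σj hje hjk
      rw [eraseRec_lookup] at hje
      rcases Option.map_eq_some_iff.mp hje with ⟨e₀, he₀, rfl⟩
      exact ih j e₀ σj he₀ hjk
  have c_ret : ∀ {Γ : Ctx} {v : Val} {τ : PosTp}, VChk Sg Γ v τ →
      VTyp Sg Γ (eraseV v) τ → ETyp Sg Γ (eraseC (.ret v)) (.str (.up τ)) := by
    intro _ _ _ _ ih; simp only [eraseC]; exact .ret ih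
  have c_letret : ∀ {Γ : Ctx} {e₁ : Comp} {τ : PosTp} {x : Var} {e₂ : Comp}
      {σ : NegTp}, ESyn Sg Γ e₁ (.str (.up τ)) → EChk Sg ((x, τ) :: Γ) e₂ σ →
      ETyp Sg Γ (eraseC e₁) (.str (.up τ)) →
      ETyp Sg ((x, τ) :: Γ) (eraseC e₂) σ →
      ETyp Sg Γ (eraseC (.letret x e₁ e₂)) σ := by
    intro _ _ _ _ _ _ _ _ ih₁ ih₂; simp only [eraseC]; exact .letret ih₁ ih₂
  have c_matchPair : ∀ {Γ : Ctx} {v : Val} {τ₁ τ₂ : PosTp} {y x : Var}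
      {e : Comp} {σ : NegTp}, VSyn Sg Γ v (.str (.tensor τ₁ τ₂)) →
      EChk Sg ((y, τ₂) :: (x, τ₁) :: Γ) e σ →
      VTyp Sg Γ (eraseV v) (.str (.tensor τ₁ τ₂)) →
      ETyp Sg ((y, τ₂) :: (x, τ₁) :: Γ) (eraseC e) σ →
      ETyp Sg Γ (eraseC (.matchPair v x y e)) σ := by
    intro _ _ _ _ _ _ _ _ _ _ ihv ihe
    simp only [eraseC]; exact .matchPair ihv ihe
  have c_matchUnit : ∀ {Γ : Ctx} {v : Val} {e : Comp} {σ : NegTp},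
      VSyn Sg Γ v (.str .one) → EChk Sg Γ e σ →
      VTyp Sg Γ (eraseV v) (.str .one) → ETyp Sg Γ (eraseC e) σ →
      ETyp Sg Γ (eraseC (.matchUnit v e)) σ := by
    intro _ _ _ _ _ _ ihv ihe
    simp only [eraseC]; exact .matchUnit ihv ihe
  have c_matchSum : ∀ {Γ : Ctx} {v : Val} {L : List (Label × PosTp)}
      {σ : NegTp} {Bs : List (Label × Var × Comp)},
      VSyn Sg Γ v (.str (.plus L)) →
      (Bs.map Prod.fst).Nodup →
      (∀ ℓ : Label, (L.lookup ℓ).isSome ↔ (Bs.lookup ℓ).isSome) →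
      (∀ (ℓ : Label) (τℓ : PosTp) (x : Var) (eℓ : Comp),
        L.lookup ℓ = some τℓ → Bs.lookup ℓ = some (x, eℓ) →
        EChk Sg ((x, τℓ) :: Γ) eℓ σ) →
      VTyp Sg Γ (eraseV v) (.str (.plus L)) →
      (∀ (ℓ : Label) (τℓ : PosTp) (x : Var) (eℓ : Comp),
        L.lookup ℓ = some τℓ → Bs.lookup ℓ = some (x, eℓ) →
        ETyp Sg ((x, τℓ) :: Γ) (eraseC eℓ) σ) →
      ETyp Sg Γ (eraseC (.matchSum v Bs)) σ := by
    intro Γ v L σ Bs _ hn hsome _ ihv ih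
    simp only [eraseC]
    refine ETyp.matchSum ihv ?_ ?_ ?_
    · rw [eraseBr_fst]; exact hn
    · intro ℓ; rw [eraseBr_lookup, Option.isSome_map]; exact hsome ℓ
    · intro ℓ τℓ x eℓ hL hB
      rw [eraseBr_lookup] at hB
      rcases Option.map_eq_some_iff.mp hB with ⟨⟨x₀, e₀⟩, he₀, heq⟩
      cases heq
      exact ih ℓ τℓ x₀ e₀ hL he₀
  have c_subE : ∀ {Γ : Ctx} {e : Comp} {σ σ' : NegTp}, ESyn Sg Γ e σ →
      GSubN Sg σ σ' → ETyp Sg Γ (eraseC e) σ → ETyp Sg Γ (eraseC e) σ' := by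
    intro _ _ _ _ _ hsub ih; exact .sub ih hsub
  have c_app : ∀ {Γ : Ctx} {e : Comp} {τ : PosTp} {σ : NegTp} {v : Val},
      ESyn Sg Γ e (.str (.arrow τ σ)) → VChk Sg Γ v τ →
      ETyp Sg Γ (eraseC e) (.str (.arrow τ σ)) → VTyp Sg Γ (eraseV v) τ →
      ETyp Sg Γ (eraseC (.app e v)) σ := by
    intro _ _ _ _ _ _ _ ihe ihv; simp only [eraseC]; exact .app ihe ihv
  have c_proj : ∀ {Γ : Ctx} {e : Comp} {Ks : List (Label × NegTp)} {j : Label}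
      {σj : NegTp}, ESyn Sg Γ e (.str (.withRec Ks)) → Ks.lookup j = some σj →
      ETyp Sg Γ (eraseC e) (.str (.withRec Ks)) →
      ETyp Sg Γ (eraseC (.proj e j)) σj := by
    intro _ _ _ _ _ _ hl ih; simp only [eraseC]; exact .proj ih hl
  have c_force : ∀ {Γ : Ctx} {v : Val} {σ : NegTp},
      VSyn Sg Γ v (.str (.down σ)) → VTyp Sg Γ (eraseV v) (.str (.down σ)) →
      ETyp Sg Γ (eraseC (.force v)) σ := by
    intro _ _ _ _ ih; simp only [eraseC]; exact .force ih
  have c_name : ∀ {f : String} {σ : NegTp} {e : Comp} {Γ : Ctx},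
      Sg.defs f = (σ, e) → ETyp Sg Γ (eraseC (.name f)) σ := by
    intro _ _ _ _ hd; simp only [eraseC]; exact .name hd
  have c_annoE : ∀ {Γ : Ctx} {e : Comp} {σ : NegTp}, EChk Sg Γ e σ →
      ETyp Sg Γ (eraseC e) σ → ETyp Sg Γ (eraseC (.anno e σ)) σ := by
    intro _ _ _ _ ih; simp only [eraseC]; exact ih
  refine ⟨fun Γ v τ h => ?_, fun Γ v τ h => ?_, fun Γ e σ h => ?_,
    fun Γ e σ h => ?_⟩
  · exact VChk.rec
      (motive_1 := fun Γ v τ _ => VTyp Sg Γ (eraseV v) τ)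
      (motive_2 := fun Γ v τ _ => VTyp Sg Γ (eraseV v) τ)
      (motive_3 := fun Γ e σ _ => ETyp Sg Γ (eraseC e) σ)
      (motive_4 := fun Γ e σ _ => ETyp Sg Γ (eraseC e) σ)
      (fun a b => c_pair a b) c_unit (fun a b => c_inj a b)
      (fun a => c_thunk a) (fun a b => c_subV a b) (fun a => c_var a)
      (fun a => c_annoV a) (fun a => c_lam a)
      (fun a b c d => c_record a b c (fun j ej σj h1 h2 => d j ej σj h1 h2))
      (fun a => c_ret a) (fun a b => c_letret a b)
      (fun a b => c_matchPair a b) (fun a b => c_matchUnit a b)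
      (fun a b c d e f => c_matchSum a b c d e
        (fun ℓ τℓ x eℓ h1 h2 => f ℓ τℓ x eℓ h1 h2))
      (fun a b => c_subE a b) (fun a b => c_app a b)
      (fun a b => c_proj a b) (fun a => c_force a) (fun a => c_name a)
      (fun a => c_annoE a) h
  · exact VSyn.rec
      (motive_1 := fun Γ v τ _ => VTyp Sg Γ (eraseV v) τ)
      (motive_2 := fun Γ v τ _ => VTyp Sg Γ (eraseV v) τ)
      (motive_3 := fun Γ e σ _ => ETyp Sg Γ (eraseC e) σ)
      (motive_4 := fun Γ e σ _ => ETyp Sg Γ (eraseC e) σ)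
      (fun a b => c_pair a b) c_unit (fun a b => c_inj a b)
      (fun a => c_thunk a) (fun a b => c_subV a b) (fun a => c_var a)
      (fun a => c_annoV a) (fun a => c_lam a)
      (fun a b c d => c_record a b c (fun j ej σj h1 h2 => d j ej σj h1 h2))
      (fun a => c_ret a) (fun a b => c_letret a b)
      (fun a b => c_matchPair a b) (fun a b => c_matchUnit a b)
      (fun a b c d e f => c_matchSum a b c d e
        (fun ℓ τℓ x eℓ h1 h2 => f ℓ τℓ x eℓ h1 h2))
      (fun a b => c_subE a b) (fun a b => c_app a b)
      (fun a b => c_proj a b) (fun a => c_force a) (fun a => c_name a)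
      (fun a => c_annoE a) h
  · exact EChk.rec
      (motive_1 := fun Γ v τ _ => VTyp Sg Γ (eraseV v) τ)
      (motive_2 := fun Γ v τ _ => VTyp Sg Γ (eraseV v) τ)
      (motive_3 := fun Γ e σ _ => ETyp Sg Γ (eraseC e) σ)
      (motive_4 := fun Γ e σ _ => ETyp Sg Γ (eraseC e) σ)
      (fun a b => c_pair a b) c_unit (fun a b => c_inj a b)
      (fun a => c_thunk a) (fun a b => c_subV a b) (fun a => c_var a)
      (fun a => c_annoV a) (fun a => c_lam a)
      (fun a b c d => c_record a b c (fun j ej σj h1 h2 => d j ej σj h1 h2))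
      (fun a => c_ret a) (fun a b => c_letret a b)
      (fun a b => c_matchPair a b) (fun a b => c_matchUnit a b)
      (fun a b c d e f => c_matchSum a b c d e
        (fun ℓ τℓ x eℓ h1 h2 => f ℓ τℓ x eℓ h1 h2))
      (fun a b => c_subE a b) (fun a b => c_app a b)
      (fun a b => c_proj a b) (fun a => c_force a) (fun a => c_name a)
      (fun a => c_annoE a) h
  · exact ESyn.rec
      (motive_1 := fun Γ v τ _ => VTyp Sg Γ (eraseV v) τ)
      (motive_2 := fun Γ v τ _ => VTyp Sg Γ (eraseV v) τ)
      (motive_3 := fun Γ e σ _ => ETyp Sg Γ (eraseC e) σ)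
      (motive_4 := fun Γ e σ _ => ETyp Sg Γ (eraseC e) σ)
      (fun a b => c_pair a b) c_unit (fun a b => c_inj a b)
      (fun a => c_thunk a) (fun a b => c_subV a b) (fun a => c_var a)
      (fun a => c_annoV a) (fun a => c_lam a)
      (fun a b c d => c_record a b c (fun j ej σj h1 h2 => d j ej σj h1 h2))
      (fun a => c_ret a) (fun a b => c_letret a b)
      (fun a b => c_matchPair a b) (fun a b => c_matchUnit a b)
      (fun a b c d e f => c_matchSum a b c d e
        (fun ℓ τℓ x eℓ h1 h2 => f ℓ τℓ x eℓ h1 h2))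
      (fun a b => c_subE a b) (fun a b => c_app a b)
      (fun a b => c_proj a b) (fun a => c_force a) (fun a => c_name a)
      (fun a => c_annoE a) h

/-- Soundness of bidirectional typechecking:
(1) if `Γ ⊢ v ⇐ τ⁺` or `Γ ⊢ v ⇒ τ⁺` then there exists a value `v'` with
    `Γ ⊢ v' : τ⁺` and `|v'| = v` (the same value up to extra annotations,
    i.e. equal after erasure);
(2) if `Γ ⊢ e ⇐ σ⁻` or `Γ ⊢ e ⇒ σ⁻` then there exists a computation `e'`
    with `Γ ⊢ e' : σ⁻` and `|e'| = e`. -/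
theorem bidirectional_sound (Sg : Signature) :
    (∀ (Γ : Ctx) (v : Val) (τ : PosTp), VChk Sg Γ v τ ∨ VSyn Sg Γ v τ →
      ∃ v' : Val, VTyp Sg Γ v' τ ∧ eraseV v' = eraseV v) ∧
    (∀ (Γ : Ctx) (e : Comp) (σ : NegTp), EChk Sg Γ e σ ∨ ESyn Sg Γ e σ →
      ∃ e' : Comp, ETyp Sg Γ e' σ ∧ eraseC e' = eraseC e) := by
  obtain ⟨hVC, hVS, hEC, hES⟩ := sound_erase Sg
  constructor
  · rintro Γ v τ (h | h)
    · exact ⟨eraseV v, hVC Γ v τ h, eraseV_idem v⟩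
    · exact ⟨eraseV v, hVS Γ v τ h, eraseV_idem v⟩
  · rintro Γ e σ (h | h)
    · exact ⟨eraseC e, hEC Γ e σ h, eraseC_idem e⟩
    · exact ⟨eraseC e, hES Γ e σ h, eraseC_idem e⟩

end CBPV
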